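/- Let κ ∈ Γₖ⁺ ⊂ ℝⁿ with principal curvatures ordered κ₁ ≥ κ₂ ≥ ⋯ ≥ κₙ. Then σ_{k-1}(κ|κ₁)·κ₁ ≥ (k/n)·σₖ(κ), where σ_{k-1}(κ|κ₁) denotes σ_{k-1} of the (n−1)-tuple obtained by removing κ₁. -/

import Mathlib

open Finset

/-- The `k`-th elementary symmetric polynomial of `κ : Fin n → ℝ`. -/
def esymm (n k : ℕ) (κ : Fin n → ℝ) : ℝ :=
  ∑ s ∈ Finset.univ.powersetCard k, ∏ i ∈ s, κ i

/-- `σ_{k-1}(κ|κᵢ)`: the `(k-1)`-th elementary symmetric polynomial of the tuple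
obtained from `κ` by removing the `i`-th entry. -/
def esymmRemoved (n k : ℕ) (κ : Fin n → ℝ) (i : Fin n) : ℝ :=
  ∑ s ∈ (Finset.univ.erase i).powersetCard k, ∏ j ∈ s, κ j


variable {n : ℕ}

noncomputable def Ee (κ : Fin n → ℝ) (j : ℕ) (s : Finset (Fin n)) : ℝ :=
  ∑ t ∈ s.powersetCard j, ∏ i ∈ t, κ i

theorem Ee_zero (κ : Fin n → ℝ) (s : Finset (Fin n)) : Ee κ 0 s = 1 := by
  simp [Ee, powersetCard_zero]

theorem Ee_of_card_lt (κ : Fin n → ℝ) {j : ℕ} {s : Finset (Fin n)} (h : s.card < j) :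
    Ee κ j s = 0 := by
  rw [Ee, powersetCard_eq_empty.2 h, sum_empty]

theorem powersetCard_erase (i : Fin n) (j : ℕ) (s : Finset (Fin n)) :
    (s.erase i).powersetCard j = (s.powersetCard j).filter (fun t => i ∉ t) := by
  ext t
  simp only [mem_powersetCard, mem_filter, subset_erase]
  tauto

theorem Ee_erase (κ : Fin n → ℝ) (i : Fin n) (j : ℕ) (s : Finset (Fin n)) :
    Ee κ j (s.erase i) = ∑ t ∈ s.powersetCard j, if i ∈ t then 0 else ∏ l ∈ t, κ l := by
  rw [Ee, powersetCard_erase, sum_filter]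
  exact sum_congr rfl fun t _ => by by_cases h : i ∈ t <;> simp [h]

theorem Ee_expand (κ : Fin n → ℝ) {i : Fin n} (j : ℕ) {s : Finset (Fin n)} (hi : i ∈ s) :
    Ee κ (j+1) s = Ee κ (j+1) (s.erase i) + κ i * Ee κ j (s.erase i) := by
  have h1 : Ee κ (j+1) s
      = ∑ t ∈ (s.powersetCard (j+1)).filter (fun t => i ∉ t), ∏ l ∈ t, κ l
      + ∑ t ∈ (s.powersetCard (j+1)).filter (fun t => ¬ i ∉ t), ∏ l ∈ t, κ l :=
    (sum_filter_add_sum_filter_not _ _ _).symm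
  rw [h1, ← powersetCard_erase]
  congr 1
  rw [Ee, mul_sum]
  apply sum_nbij' (fun t => t.erase i) (fun t => insert i t)
  · intro t ht
    simp only [mem_filter, mem_powersetCard, not_not] at ht
    obtain ⟨⟨hts, hcard⟩, hit⟩ := ht
    simp only [mem_powersetCard]
    constructor
    · intro x hx
      simp only [mem_erase] at hx ⊢
      exact ⟨hx.1, hts hx.2⟩
    · rw [card_erase_of_mem hit, hcard]; omega
  · intro t ht
    simp only [mem_powersetCard, subset_erase] at ht
    obtain ⟨⟨hts, hit⟩, hcard⟩ := ht
    simp only [mem_filter, mem_powersetCard, not_not]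
    exact ⟨⟨insert_subset hi hts, by rw [card_insert_of_notMem hit, hcard]⟩, mem_insert_self _ _⟩
  · intro t ht
    simp only [mem_filter, not_not] at ht
    exact insert_erase ht.2
  · intro t ht
    simp only [mem_powersetCard, subset_erase] at ht
    exact erase_insert ht.1.2
  · intro t ht
    simp only [mem_filter, not_not] at ht
    exact (mul_prod_erase t κ ht.2).symm

-- I2
theorem Ee_sum_erase (κ : Fin n → ℝ) (j : ℕ) (s : Finset (Fin n)) :
    ∑ i ∈ s, Ee κ j (s.erase i) = ((s.card : ℝ) - j) * Ee κ j s := by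
  have h : ∀ i ∈ s, Ee κ j (s.erase i)
      = ∑ t ∈ s.powersetCard j, if i ∈ t then 0 else ∏ l ∈ t, κ l :=
    fun i _ => Ee_erase κ i j s
  rw [sum_congr rfl h, sum_comm]
  rcases le_or_gt j s.card with hj | hj
  · rw [Ee, mul_sum]
    apply sum_congr rfl
    intro t ht
    simp only [mem_powersetCard] at ht
    rw [sum_ite, sum_const_zero, zero_add, sum_const, ← sdiff_eq_filter,
      card_sdiff_of_subset ht.1, ht.2, nsmul_eq_mul, Nat.cast_sub hj]
  · rw [powersetCard_eq_empty.2 hj, sum_empty, Ee, powersetCard_eq_empty.2 hj, sum_empty,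
      mul_zero]

-- I3
theorem Ee_sum_mul_erase (κ : Fin n → ℝ) (j : ℕ) (s : Finset (Fin n)) :
    ∑ i ∈ s, κ i * Ee κ j (s.erase i) = ((j : ℝ) + 1) * Ee κ (j+1) s := by
  have h : ∀ i ∈ s, κ i * Ee κ j (s.erase i)
      = Ee κ (j+1) s - Ee κ (j+1) (s.erase i) := by
    intro i hi
    rw [Ee_expand κ j hi]; ring
  rw [sum_congr rfl h, sum_sub_distrib, sum_const, Ee_sum_erase, nsmul_eq_mul]
  push_cast
  ring

-- all entries positive ⇒ Ee positive
theorem Ee_pos_of_pos (κ : Fin n → ℝ) {j : ℕ} {s : Finset (Fin n)}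
    (hpos : ∀ i ∈ s, 0 < κ i) (hj : j ≤ s.card) : 0 < Ee κ j s := by
  apply sum_pos'
  · intro t ht
    simp only [mem_powersetCard] at ht
    exact le_of_lt (prod_pos fun i hi => hpos i (ht.1 hi))
  · obtain ⟨t, ht⟩ := (powersetCard_nonempty.2 hj)
    refine ⟨t, ht, ?_⟩
    simp only [mem_powersetCard] at ht
    exact prod_pos fun i hi => hpos i (ht.1 hi)

-- Lemma R : removing a nonpositive entry
theorem Ee_erase_pos_of_nonpos (κ : Fin n → ℝ) {k : ℕ} {s : Finset (Fin n)} {i : Fin n}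
    (hi : i ∈ s) (hineg : κ i ≤ 0) (hΓ : ∀ l, 1 ≤ l → l ≤ k → 0 < Ee κ l s) :
    ∀ l, l ≤ k → 0 < Ee κ l (s.erase i) := by
  intro l hl
  induction l with
  | zero => rw [Ee_zero]; norm_num
  | succ m ih =>
    have h1 : 0 < Ee κ (m+1) s := hΓ (m+1) (Nat.succ_le_succ (Nat.zero_le m)) hl
    have h2 := Ee_expand κ m hi
    have h3 : 0 < Ee κ m (s.erase i) := ih (le_trans (Nat.le_succ m) hl)
    nlinarith

theorem Ee_prod_add (κ : Fin n → ℝ) (s : Finset (Fin n)) (x : ℝ) :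
    ∏ i ∈ s, (κ i + x) = ∑ l ∈ range (s.card + 1), Ee κ l s * x ^ (s.card - l) := by
  rw [prod_add, powerset_card_disjiUnion]
  erw [sum_disjiUnion]
  apply sum_congr rfl
  intro l _
  rw [Ee, sum_mul]
  apply sum_congr rfl
  intro t ht
  simp only [mem_powersetCard] at ht
  rw [prod_const, card_sdiff_of_subset ht.1, ht.2]

-- L4 : if Γ(s, card s) then all entries positive
theorem Ee_all_pos (κ : Fin n → ℝ) {s : Finset (Fin n)}
    (hΓ : ∀ l, 1 ≤ l → l ≤ s.card → 0 < Ee κ l s) : ∀ i ∈ s, 0 < κ i := by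
  intro i hi
  by_contra hle
  push_neg at hle
  have hx : (0:ℝ) ≤ -κ i := by linarith
  have h0 : ∏ j ∈ s, (κ j + (-κ i)) = 0 :=
    prod_eq_zero hi (by ring)
  rw [Ee_prod_add] at h0
  have hcard : 1 ≤ s.card := card_pos.2 ⟨i, hi⟩
  have hpos : 0 < ∑ l ∈ range (s.card + 1), Ee κ l s * (-κ i) ^ (s.card - l) := by
    apply sum_pos'
    · intro l hl
      rcases Nat.eq_zero_or_pos l with h | h
      · subst h; rw [Ee_zero]; positivity
      · have := hΓ l h (by simp at hl; omega)
        positivity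
    · refine ⟨s.card, self_mem_range_succ _, ?_⟩
      have := hΓ s.card hcard le_rfl
      simp only [Nat.sub_self, pow_zero, mul_one]
      exact this
  linarith

theorem Ee_one (κ : Fin n → ℝ) (s : Finset (Fin n)) : Ee κ 1 s = ∑ i ∈ s, κ i := by
  rw [Ee, powersetCard_one, sum_map]
  exact sum_congr rfl fun i _ => by simp

theorem Ee_main (κ : Fin n → ℝ) : ∀ m : ℕ, ∀ s : Finset (Fin n), s.card = m → ∀ k : ℕ,
    (∀ l, 1 ≤ l → l ≤ k → 0 < Ee κ l s) →
    ((∀ i ∈ s, ∀ j, j + 1 ≤ k → 0 < Ee κ j (s.erase i)) ∧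
     (∀ j, j + 2 ≤ k → Ee κ (j+2) s * Ee κ j s ≤ Ee κ (j+1) s ^ 2)) := by
  intro m
  induction m using Nat.strong_induction_on with
  | _ m IH =>
  intro s hs k hΓ
  have ha : ∀ i ∈ s, ∀ j, j + 1 ≤ k → 0 < Ee κ j (s.erase i) := by
    intro i hi j hj
    have hk1 : 1 ≤ k := le_trans (Nat.le_add_left 1 j) hj
    have hks : k ≤ s.card := by
      by_contra h
      push_neg at h
      exact absurd (hΓ k hk1 le_rfl) (by rw [Ee_of_card_lt κ h]; exact lt_irrefl 0)
    by_cases hall : ∀ l ∈ s, 0 < κ l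
    · apply Ee_pos_of_pos κ (fun l hl => hall l (mem_of_mem_erase hl))
      rw [card_erase_of_mem hi]; omega
    · push_neg at hall
      obtain ⟨q, hq, hqneg⟩ := hall
      have hRq : ∀ l, l ≤ k → 0 < Ee κ l (s.erase q) :=
        Ee_erase_pos_of_nonpos κ hq hqneg hΓ
      by_cases hiq : i = q
      · subst hiq; exact hRq j (by omega)
      · -- i ≠ q
        have hqcard := card_erase_of_mem hq
        have hiL : i ∈ s.erase q := mem_erase.2 ⟨hiq, hi⟩
        have hmpos : 2 ≤ m := by
          have := one_lt_card.2 ⟨i, hi, q, hq, hiq⟩; omega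
        have IHL := IH (m-1) (by omega) (s.erase q) (by omega) k
          (fun l h1 h2 => hRq l h2)
        have hν : ∀ l, l + 1 ≤ k → 0 < Ee κ l ((s.erase q).erase i) :=
          IHL.1 i hiL
        have hνs : (s.erase i).erase q = (s.erase q).erase i := erase_right_comm
        match j with
        | 0 => rw [Ee_zero]; norm_num
        | t+1 =>
          have hqi : q ∈ s.erase i := mem_erase.2 ⟨fun h => hiq h.symm, hq⟩
          have hexp : Ee κ (t+1) (s.erase i)
              = Ee κ (t+1) ((s.erase q).erase i) + κ q * Ee κ t ((s.erase q).erase i) := by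
            rw [Ee_expand κ t hqi, hνs]
          have hexp2 : Ee κ (t+2) s
              = Ee κ (t+2) (s.erase q) + κ q * Ee κ (t+1) (s.erase q) :=
            Ee_expand κ (t+1) hq
          have hexp3 : Ee κ (t+1) (s.erase q)
              = Ee κ (t+1) ((s.erase q).erase i) + κ i * Ee κ t ((s.erase q).erase i) :=
            Ee_expand κ t hiL
          have hexp4 : Ee κ (t+2) (s.erase q)
              = Ee κ (t+2) ((s.erase q).erase i) + κ i * Ee κ (t+1) ((s.erase q).erase i) :=
            Ee_expand κ (t+1) hiL
          have hσ : 0 < Ee κ (t+2) s := hΓ (t+2) (by omega) (by omega)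
          have hL1 : 0 < Ee κ (t+1) (s.erase q) := hRq (t+1) (by omega)
          have hν0 : 0 < Ee κ t ((s.erase q).erase i) := hν t (by omega)
          have hν1 : 0 < Ee κ (t+1) ((s.erase q).erase i) := hν (t+1) (by omega)
          -- Newton instance at ν
          have hNewton : Ee κ (t+2) ((s.erase q).erase i) * Ee κ t ((s.erase q).erase i)
              ≤ Ee κ (t+1) ((s.erase q).erase i) ^ 2 := by
            rcases le_or_gt (Ee κ (t+2) ((s.erase q).erase i)) 0 with hsign | hsign
            · nlinarith
            · have IHν := IH (m-2) (by omega) ((s.erase q).erase i)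
                (by rw [card_erase_of_mem hiL]; omega) (t+2)
                (fun l h1 h2 => by
                  rcases Nat.lt_or_ge l (t+2) with h | h
                  · exact hν l (by omega)
                  · have : l = t + 2 := by omega
                    rw [this]; exact hsign)
              exact IHν.2 t le_rfl
          rw [hexp]
          nlinarith [mul_pos hν0 hL1]
  refine ⟨ha, ?_⟩
  intro j hj
  have hσ1 : 0 < Ee κ 1 s := hΓ 1 (by omega) (by omega)
  have hp : ∃ p ∈ s, 0 < κ p := by
    by_contra h
    push_neg at h
    have : Ee κ 1 s ≤ 0 := by rw [Ee_one]; exact sum_nonpos h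
    linarith
  obtain ⟨p, hp, hppos⟩ := hp
  have haL : ∀ l, l + 1 ≤ k → 0 < Ee κ l (s.erase p) := ha p hp
  have hm1 : 1 ≤ m := by have := card_pos.2 ⟨p, hp⟩; omega
  have hcard : (s.erase p).card = m - 1 := by rw [card_erase_of_mem hp, hs]
  have IHL := fun (kk : ℕ) (h : ∀ l, 1 ≤ l → l ≤ kk → 0 < Ee κ l (s.erase p)) =>
    (IH (m-1) (by omega) (s.erase p) hcard kk h).2
  match j with
  | 0 =>
    have e1 : Ee κ 1 s = Ee κ 1 (s.erase p) + κ p * Ee κ 0 (s.erase p) := Ee_expand κ 0 hp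
    have e2 : Ee κ 2 s = Ee κ 2 (s.erase p) + κ p * Ee κ 1 (s.erase p) := Ee_expand κ 1 hp
    have hb1 : 0 < Ee κ 1 (s.erase p) := haL 1 (by omega)
    have hA : Ee κ 2 (s.erase p) * Ee κ 0 (s.erase p) ≤ Ee κ 1 (s.erase p) ^ 2 := by
      rcases le_or_gt (Ee κ 2 (s.erase p)) 0 with h | h
      · rw [Ee_zero]; nlinarith
      · refine IHL 2 (fun l h1 h2 => ?_) 0 le_rfl
        have : l = 1 ∨ l = 2 := by omega
        rcases this with h' | h' <;> subst h'
        exacts [hb1, h]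
    rw [Ee_zero] at hA ⊢
    rw [Ee_zero] at e1
    rw [e1, e2]
    nlinarith
  | u+1 =>
    set a := Ee κ u (s.erase p) with hadef
    set b := Ee κ (u+1) (s.erase p) with hbdef
    set c := Ee κ (u+2) (s.erase p) with hcdef
    set d := Ee κ (u+3) (s.erase p) with hddef
    have hapos : 0 < a := haL u (by omega)
    have hbpos : 0 < b := haL (u+1) (by omega)
    have hcpos : 0 < c := haL (u+2) (by omega)
    have hC : c * a ≤ b ^ 2 := by
      refine IHL (u+2) (fun l h1 h2 => haL l (by omega)) u (by omega)
    have hA : d * b ≤ c ^ 2 := by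
      rcases le_or_gt d 0 with h | h
      · nlinarith
      · refine IHL (u+3) (fun l h1 h2 => ?_) (u+1) (by omega)
        rcases Nat.lt_or_ge l (u+3) with h' | h'
        · exact haL l (by omega)
        · have : l = u + 3 := by omega
          rw [this]; exact h
    have hB : d * a ≤ c * b := by
      rcases le_or_gt d 0 with h | h
      · nlinarith
      · nlinarith [mul_pos hcpos hbpos, mul_pos hbpos hapos]
    have e1 : Ee κ (u+1) s = b + κ p * a := Ee_expand κ u hp
    have e2 : Ee κ (u+2) s = c + κ p * b := Ee_expand κ (u+1) hp
    have e3 : Ee κ (u+3) s = d + κ p * c := Ee_expand κ (u+2) hp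
    rw [e1, e2, e3]
    have h1 : 0 ≤ c ^ 2 - d * b := by linarith
    have h2 : 0 ≤ κ p * (c * b - d * a) := mul_nonneg hppos.le (by linarith)
    have h3 : 0 ≤ κ p ^ 2 * (b ^ 2 - c * a) := mul_nonneg (sq_nonneg _) (by linarith)
    nlinarith [h1, h2, h3]


theorem stmt3 (n k : ℕ) (hn : 0 < n) (hk : 1 ≤ k) (hk' : k ≤ n)
    (κ : Fin n → ℝ) (hΓ : ∀ j, 1 ≤ j → j ≤ k → 0 < esymm n j κ)
    (hord : ∀ i j : Fin n, i ≤ j → κ j ≤ κ i) :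
    (k : ℝ) / n * esymm n k κ ≤ esymmRemoved n (k - 1) κ ⟨0, hn⟩ * κ ⟨0, hn⟩ := by
  set i₀ : Fin n := ⟨0, hn⟩ with hi₀
  have hEe : ∀ j, esymm n j κ = Ee κ j univ := fun j => rfl
  have hEeR : ∀ j, esymmRemoved n j κ i₀ = Ee κ j (univ.erase i₀) := fun j => rfl
  have hΓ' : ∀ l, 1 ≤ l → l ≤ k → 0 < Ee κ l univ := by
    intro l h1 h2; rw [← hEe]; exact hΓ l h1 h2
  have hmax : ∀ i, κ i ≤ κ i₀ := by
    intro i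
    exact hord i₀ i (by simp [hi₀, Fin.le_def])
  have hcu : (univ : Finset (Fin n)).card = n := by simp
  have main := Ee_main κ n univ hcu k hΓ'
  have hκ0 : 0 < κ i₀ := by
    have h1 : 0 < Ee κ 1 univ := hΓ' 1 le_rfl hk
    rw [Ee_one] at h1
    by_contra hle
    push_neg at hle
    have : ∑ i : Fin n, κ i ≤ 0 :=
      sum_nonpos fun i _ => le_trans (hmax i) hle
    linarith
  have hk1 : k - 1 + 1 = k := by omega
  have hA : 0 < Ee κ (k-1) (univ.erase i₀) :=
    main.1 i₀ (mem_univ i₀) (k-1) (by omega)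
  have hexp : Ee κ k univ
      = Ee κ k (univ.erase i₀) + κ i₀ * Ee κ (k-1) (univ.erase i₀) := by
    have h := Ee_expand κ (k-1) (mem_univ i₀)
    rwa [hk1] at h
  have hσk : 0 < Ee κ k univ := hΓ' k hk le_rfl
  have hn' : (0:ℝ) < n := by exact_mod_cast hn
  rw [hEe, hEeR]
  rcases le_or_gt (Ee κ k (univ.erase i₀)) 0 with hB | hB
  · have hdiv : (k:ℝ)/n ≤ 1 := by
      rw [div_le_one hn']; exact_mod_cast hk'
    have h2 : (k:ℝ)/n * Ee κ k univ ≤ Ee κ k univ :=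
      mul_le_of_le_one_left hσk.le hdiv
    nlinarith
  · -- σ_k(λ) > 0
    have hcL : (univ.erase i₀).card = n - 1 := by
      rw [card_erase_of_mem (mem_univ i₀), hcu]
    have ΓL : ∀ l, 1 ≤ l → l ≤ k → 0 < Ee κ l (univ.erase i₀) := by
      intro l h1 h2
      rcases Nat.lt_or_ge l k with h | h
      · exact main.1 i₀ (mem_univ i₀) l (by omega)
      · have : l = k := by omega
        rw [this]; exact hB
    have mainL := Ee_main κ (n-1) (univ.erase i₀) hcL k ΓL
    have hsum : ∑ i ∈ univ.erase i₀, κ i * Ee κ (k-1) ((univ.erase i₀).erase i)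
        = (k:ℝ) * Ee κ k (univ.erase i₀) := by
      have h := Ee_sum_mul_erase κ (k-1) (univ.erase i₀)
      rw [hk1] at h
      rw [h]
      congr 1
      push_cast [Nat.cast_sub hk]
      ring
    have hbound : ∑ i ∈ univ.erase i₀, κ i * Ee κ (k-1) ((univ.erase i₀).erase i)
        ≤ κ i₀ * (((n:ℝ) - k) * Ee κ (k-1) (univ.erase i₀)) := by
      have step1 : ∑ i ∈ univ.erase i₀, κ i * Ee κ (k-1) ((univ.erase i₀).erase i)
          ≤ ∑ i ∈ univ.erase i₀, κ i₀ * Ee κ (k-1) ((univ.erase i₀).erase i) := by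
        apply sum_le_sum
        intro i hi
        have hpos : 0 < Ee κ (k-1) ((univ.erase i₀).erase i) :=
          mainL.1 i hi (k-1) (by omega)
        exact mul_le_mul_of_nonneg_right (hmax i) hpos.le
      have step2 : ∑ i ∈ univ.erase i₀, κ i₀ * Ee κ (k-1) ((univ.erase i₀).erase i)
          = κ i₀ * (((n:ℝ) - k) * Ee κ (k-1) (univ.erase i₀)) := by
        rw [← mul_sum, Ee_sum_erase, hcL]
        congr 2
        push_cast [Nat.cast_sub hn, Nat.cast_sub hk]
        ring
      linarith
    rw [div_mul_eq_mul_div, div_le_iff₀ hn']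
    rw [hsum] at hbound
    nlinarith [mul_pos hκ0 hA]
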